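/- (Attainment of contact in the wiggly-dissipation cell problem.) Let μ : ℝ → ℝ be continuous, 1-periodic, with 0 < m ≤ μ(y) for all y, and set μ̄ := ∫₀¹ μ(y) dy. Let v ≠ 0 and set ξ := μ̄ v. Then there exists a continuously differentiable z : [0,1] → ℝ with z(1) = z(0) + sign(v) such that ∫₀¹ [ μ(z(s)) (v z′(s))² / 2 + ξ² / (2 μ(z(s))) ] ds = ξ v. -/

import Mathlib

open MeasureTheory intervalIntegral Filter

/-- **Attainment of contact in the wiggly-dissipation cell problem.**
For `μ` continuous, 1-periodic and bounded below by `m > 0`, with mean `μ̄ = ∫₀¹ μ`,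
and any `v ≠ 0`, setting `ξ := μ̄ v` there is a `C¹` curve `z : [0,1] → ℝ` with
`z(1) = z(0) + sign v` and `∫₀¹ [μ(z)(v z′)²/2 + ξ²/(2μ(z))] ds = ξ v`. -/
theorem statement11 (μ : ℝ → ℝ) (hμcont : Continuous μ) (hμper : ∀ y, μ (y + 1) = μ y)
    (m : ℝ) (hm : 0 < m) (hμlb : ∀ y, m ≤ μ y)
    (v : ℝ) (hv : v ≠ 0) :
    ∃ z : ℝ → ℝ, ContDiffOn ℝ 1 z (Set.Icc 0 1) ∧ z 1 = z 0 + Real.sign v ∧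
      (∫ s in (0:ℝ)..1,
          (μ (z s) * (v * derivWithin z (Set.Icc 0 1) s) ^ 2 / 2 +
            ((∫ y in (0:ℝ)..1, μ y) * v) ^ 2 / (2 * μ (z s))))
        = ((∫ y in (0:ℝ)..1, μ y) * v) * v := by
  have hμpos : ∀ y, 0 < μ y := fun y => hm.trans_le (hμlb y)
  have hμne : ∀ y, μ y ≠ 0 := fun y => (hμpos y).ne'
  set c : ℝ := ∫ y in (0:ℝ)..1, μ y with hc_def
  have hint : ∀ a b : ℝ, IntervalIntegrable μ volume a b := fun a b =>
    hμcont.intervalIntegrable a b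
  have hc : 0 < c := by
    have h1 := intervalIntegral.integral_mono_on (by norm_num : (0:ℝ) ≤ 1)
      (_root_.intervalIntegrable_const (c := m)) (hint 0 1) (fun x _ => hμlb x)
    simp [smul_eq_mul] at h1
    linarith
  -- G : primitive of μ divided by c
  set G : ℝ → ℝ := fun y => (∫ t in (0:ℝ)..y, μ t) / c with hG_def
  have hGd : ∀ y, HasDerivAt G (μ y / c) y := by
    intro y
    exact (intervalIntegral.integral_hasDerivAt_right (hint 0 y)
      (hμcont.stronglyMeasurableAtFilter _ _) hμcont.continuousAt).div_const c
  have hGcont : Continuous G := by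
    have := fun y => (hGd y).continuousAt
    exact continuous_iff_continuousAt.2 this
  have hGmono : StrictMono G := by
    apply strictMono_of_deriv_pos
    intro x
    rw [(hGd x).deriv]
    exact div_pos (hμpos x) hc
  -- bounds for surjectivity
  have hGge : ∀ y : ℝ, 0 ≤ y → m / c * y ≤ G y := by
    intro y hy
    have h1 := intervalIntegral.integral_mono_on hy
      (_root_.intervalIntegrable_const (c := m)) (hint 0 y) (fun x _ => hμlb x)
    simp only [intervalIntegral.integral_const, smul_eq_mul] at h1
    rw [hG_def]
    rw [div_mul_eq_mul_div, div_le_div_iff_of_pos_right hc]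
    nlinarith
  have hGle : ∀ y : ℝ, y ≤ 0 → G y ≤ m / c * y := by
    intro y hy
    have h1 := intervalIntegral.integral_mono_on hy
      (_root_.intervalIntegrable_const (c := m)) (hint y 0) (fun x _ => hμlb x)
    simp only [intervalIntegral.integral_const, smul_eq_mul] at h1
    have h2 : (∫ t in (0:ℝ)..y, μ t) = -∫ t in y..(0:ℝ), μ t :=
      (intervalIntegral.integral_symm y 0)
    rw [hG_def]
    simp only
    rw [div_mul_eq_mul_div, div_le_div_iff_of_pos_right hc, h2]
    nlinarith
  have hmc : 0 < m / c := div_pos hm hc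
  have htop : Tendsto G atTop atTop := by
    apply tendsto_atTop_mono' atTop (f₁ := fun y => m / c * y)
    · filter_upwards [eventually_ge_atTop (0:ℝ)] with y hy using hGge y hy
    · exact Tendsto.const_mul_atTop hmc tendsto_id
  have hbot : Tendsto G atBot atBot := by
    refine tendsto_atBot_mono' atBot (show G ≤ᶠ[atBot] fun y => m / c * y from ?_) ?_
    · filter_upwards [eventually_le_atBot (0:ℝ)] with y hy using hGle y hy
    · exact Tendsto.const_mul_atBot hmc tendsto_id
  have hGsurj : Function.Surjective G := hGcont.surjective htop hbot
  set e : ℝ ≃o ℝ := StrictMono.orderIsoOfSurjective G hGmono hGsurj with he_def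
  set w : ℝ → ℝ := fun s => e.symm s with hw_def
  have hGw : ∀ s, G (w s) = s := fun s => e.apply_symm_apply s
  have hwcont : Continuous w := e.symm.continuous
  have hwG : ∀ y, w (G y) = y := fun y => e.symm_apply_apply y
  -- derivative of w
  have hwd : ∀ s, HasDerivAt w (c / μ (w s)) s := by
    intro s
    have h := HasDerivAt.of_local_left_inverse (hwcont.continuousAt (x := s))
      (hGd (w s)) (div_ne_zero (hμne _) hc.ne') (Eventually.of_forall hGw |>.mono (fun y hy => hGw y))
    · rw [inv_div] at h
      exact h
  -- sign
  set σ : ℝ := Real.sign v with hσ_def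
  have hσ : σ = 1 ∨ σ = -1 := by
    rcases lt_or_gt_of_ne hv with h | h
    · right; rw [hσ_def]; exact Real.sign_of_neg h
    · left; rw [hσ_def]; exact Real.sign_of_pos h
  have hσ2 : σ * σ = 1 := by rcases hσ with h | h <;> rw [h] <;> norm_num
  -- z
  set z : ℝ → ℝ := fun s => w (σ * s) with hz_def
  have hzd : ∀ s, HasDerivAt z (σ * (c / μ (z s))) s := by
    intro s
    have h1 : HasDerivAt (fun s : ℝ => σ * s) σ s := by
      simpa using (hasDerivAt_id s).const_mul σ
    have h2 := (hwd (σ * s)).comp s h1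
    have h3 : HasDerivAt (fun s => w (σ * s)) (c / μ (w (σ * s)) * σ) s := by
      simpa [Function.comp_def] using h2
    rw [hz_def]
    convert h3 using 1
    ring
  have hzdiff : Differentiable ℝ z := fun s => (hzd s).differentiableAt
  have hzderiv : ∀ s, deriv z s = σ * (c / μ (z s)) := fun s => (hzd s).deriv
  have hzcont : Continuous z := hwcont.comp (continuous_const.mul continuous_id)
  have hzC1 : ContDiff ℝ 1 z := by
    rw [contDiff_one_iff_deriv]
    refine ⟨hzdiff, ?_⟩
    have : (deriv z) = fun s => σ * (c / μ (z s)) := funext hzderiv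
    rw [this]
    exact continuous_const.mul (continuous_const.div (hμcont.comp hzcont) (fun s => hμne _))
  -- endpoints
  have hw0 : w 0 = 0 := by
    have : G 0 = 0 := by simp [hG_def]
    calc w 0 = w (G 0) := by rw [this]
    _ = 0 := hwG 0
  have hGσ : G σ = σ := by
    rcases hσ with h | h
    · rw [h]
      show (∫ t in (0:ℝ)..1, μ t) / c = 1
      rw [← hc_def]
      exact div_self hc.ne'
    · rw [h]
      have hper : Function.Periodic μ 1 := hμper
      have h2 := hper.intervalIntegral_add_eq (-1) 0
      norm_num at h2
      have h3 : (∫ t in (0:ℝ)..(-1:ℝ), μ t) = -c := by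
        rw [intervalIntegral.integral_symm, h2, ← hc_def]
      show (∫ t in (0:ℝ)..(-1:ℝ), μ t) / c = -1
      rw [h3]
      field_simp
  have hwσ : w σ = σ := by
    calc w σ = w (G σ) := by rw [hGσ]
    _ = σ := hwG σ
  have hz0 : z 0 = 0 := by simp [hz_def, hw0]
  have hz1 : z 1 = σ := by simp [hz_def, hwσ]
  refine ⟨z, hzC1.contDiffOn, by rw [hz1, hz0, hσ_def]; ring, ?_⟩
  -- compute integral
  have hudiff : UniqueDiffOn ℝ (Set.Icc (0:ℝ) 1) := uniqueDiffOn_Icc one_pos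
  have hkey : Set.EqOn
      (fun s => (μ (z s) * (v * derivWithin z (Set.Icc 0 1) s) ^ 2 / 2 +
            (c * v) ^ 2 / (2 * μ (z s))))
      (fun s => (c * v * v * σ) * deriv z s) (Set.uIcc 0 1) := by
    intro s hs
    rw [Set.uIcc_of_le (by norm_num : (0:ℝ) ≤ 1)] at hs
    have hdw : derivWithin z (Set.Icc 0 1) s = σ * (c / μ (z s)) :=
      ((hzd s).hasDerivWithinAt).derivWithin (hudiff s hs)
    simp only [hdw, hzderiv s]
    have hA := hμpos (z s)
    have hAne : μ (z s) ≠ 0 := hA.ne'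
    rcases hσ with h | h <;> rw [h] <;> field_simp <;> ring
  rw [show ((∫ y in (0:ℝ)..1, μ y) * v) = c * v from rfl,
    intervalIntegral.integral_congr hkey, intervalIntegral.integral_const_mul]
  have hftc : (∫ s in (0:ℝ)..1, deriv z s) = z 1 - z 0 := by
    apply intervalIntegral.integral_eq_sub_of_hasDerivAt
    · intro x _
      rw [hzderiv x]; exact hzd x
    · have : Continuous (deriv z) := by
        rw [funext hzderiv]
        exact continuous_const.mul (continuous_const.div (hμcont.comp hzcont) (fun s => hμne _))
      exact this.intervalIntegrable 0 1
  rw [hftc, hz1, hz0]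
  rcases hσ with h | h <;> rw [h] <;> ring
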